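/- In the hyperbolic numbers, the geometric series ∑_{n=0}^∞ zⁿ converges for every z = x + jy with |x+y| < 1 and |x−y| < 1 (the open diamond with vertices ±1, ±j). -/
import Mathlib


open Filter Finset Topology

/-- Multiplication of hyperbolic numbers `ℝ ⊕ jℝ` (with `j² = 1`), represented as
pairs `(x, y) = x + jy`: `(a+bj)(c+dj) = ac+bd + (ad+bc)j`. -/
def hmul (z w : ℝ × ℝ) : ℝ × ℝ :=
  (z.1 * w.1 + z.2 * w.2, z.1 * w.2 + z.2 * w.1)

/-- Powers of a hyperbolic number: `z⁰ = 1`, `z^(n+1) = zⁿ · z`. -/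
def hpow (z : ℝ × ℝ) : ℕ → ℝ × ℝ
  | 0 => (1, 0)
  | n + 1 => hmul (hpow z n) z

/-- In the hyperbolic numbers, the geometric series `∑ zⁿ`
converges for every `z = x + jy` with `|x + y| < 1` and `|x − y| < 1` (the open
diamond with vertices `±1, ±j`). -/
theorem stmt11_geometric_diamond (x y : ℝ) (h1 : |x + y| < 1) (h2 : |x - y| < 1) :
    ∃ S : ℝ × ℝ, Tendsto (fun N => ∑ k ∈ Finset.range N, hpow (x, y) k)
      atTop (𝓝 S) := by
  have key : ∀ n, hpow (x, y) n =
      (((x+y)^n + (x-y)^n)/2, ((x+y)^n - (x-y)^n)/2) := by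
    intro n
    induction n with
    | zero => simp [hpow]
    | succ n ih => simp [hpow, hmul, ih]; constructor <;> ring
  have hu : Tendsto (fun N => ∑ k ∈ Finset.range N, (x+y)^k) atTop
      (𝓝 (1 - (x+y))⁻¹) := (hasSum_geometric_of_abs_lt_one h1).tendsto_sum_nat
  have hv : Tendsto (fun N => ∑ k ∈ Finset.range N, (x-y)^k) atTop
      (𝓝 (1 - (x-y))⁻¹) := (hasSum_geometric_of_abs_lt_one h2).tendsto_sum_nat
  refine ⟨((((1-(x+y))⁻¹ + (1-(x-y))⁻¹))/2, (((1-(x+y))⁻¹ - (1-(x-y))⁻¹))/2), ?_⟩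
  have h1' : Tendsto (fun N => ∑ k ∈ Finset.range N, (hpow (x, y) k).1) atTop
      (𝓝 ((((1-(x+y))⁻¹ + (1-(x-y))⁻¹))/2)) := by
    have : (fun N => ∑ k ∈ Finset.range N, (hpow (x, y) k).1) =
        fun N => ((∑ k ∈ Finset.range N, (x+y)^k) + ∑ k ∈ Finset.range N, (x-y)^k)/2 := by
      funext N
      rw [← Finset.sum_add_distrib, Finset.sum_div]
      exact Finset.sum_congr rfl fun k _ => by rw [key k]
    rw [this]
    exact (hu.add hv).div_const 2
  have h2' : Tendsto (fun N => ∑ k ∈ Finset.range N, (hpow (x, y) k).2) atTop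
      (𝓝 ((((1-(x+y))⁻¹ - (1-(x-y))⁻¹))/2)) := by
    have : (fun N => ∑ k ∈ Finset.range N, (hpow (x, y) k).2) =
        fun N => ((∑ k ∈ Finset.range N, (x+y)^k) - ∑ k ∈ Finset.range N, (x-y)^k)/2 := by
      funext N
      rw [← Finset.sum_sub_distrib, Finset.sum_div]
      exact Finset.sum_congr rfl fun k _ => by rw [key k]
    rw [this]
    exact (hu.sub hv).div_const 2
  have : (fun N => ∑ k ∈ Finset.range N, hpow (x, y) k) =
      fun N => ((∑ k ∈ Finset.range N, (hpow (x, y) k).1),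
                (∑ k ∈ Finset.range N, (hpow (x, y) k).2)) := by
    funext N; exact Prod.ext (Prod.fst_sum ..) (Prod.snd_sum ..)
  rw [this]
  exact h1'.prodMk_nhds h2'
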